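/- Fix κ > 0 and a > 0. For each b ∈ ℝ there exists a unique u₀ ∈ ℝ such that the solution u(·; u₀) of u' = v/√(1+v²), v' = κu with u(0) = u₀, v(0) = 0 satisfies u(a; u₀) = b. That is, the family of solution graphs {u(·; u₀) : u₀ ∈ ℝ} foliates the plane. -/

import Mathlib

noncomputable def gg (v : ℝ) : ℝ := v / Real.sqrt (1 + v ^ 2)

lemma gg_hasDerivAt (v : ℝ) : HasDerivAt gg (1 / Real.sqrt (1 + v ^ 2) ^ 3) v := by
  have h1 : (0:ℝ) < 1 + v ^ 2 := by positivity
  have hs : 0 < Real.sqrt (1 + v ^ 2) := Real.sqrt_pos.mpr h1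
  have hs2 : Real.sqrt (1 + v ^ 2) ^ 2 = 1 + v ^ 2 := Real.sq_sqrt h1.le
  have hin : HasDerivAt (fun v : ℝ => 1 + v ^ 2) (2 * v) v := by
    simpa using ((hasDerivAt_pow 2 v).const_add 1)
  have hsq : HasDerivAt (fun v : ℝ => Real.sqrt (1 + v ^ 2))
      (2 * v / (2 * Real.sqrt (1 + v ^ 2))) v := hin.sqrt h1.ne'
  have : HasDerivAt gg _ v := (hasDerivAt_id v).div hsq hs.ne'
  convert this using 1
  simp only [id]
  field_simp
  linear_combination (-1 : ℝ) * hs2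

lemma gg_deriv (v : ℝ) : deriv gg v = 1 / Real.sqrt (1 + v ^ 2) ^ 3 :=
  (gg_hasDerivAt v).deriv

lemma gg_diff : Differentiable ℝ gg := fun v => (gg_hasDerivAt v).differentiableAt

lemma gg_mono : Monotone gg := by
  apply monotone_of_deriv_nonneg gg_diff
  intro v
  rw [gg_deriv]
  positivity

lemma gg_lip : ∀ x y : ℝ, |gg x - gg y| ≤ |x - y| := by
  have hl : LipschitzWith 1 gg := by
    apply lipschitzWith_of_nnnorm_deriv_le gg_diff
    intro v
    rw [← NNReal.coe_le_coe, coe_nnnorm, gg_deriv, Real.norm_eq_abs]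
    have h1 : (0:ℝ) < 1 + v ^ 2 := by positivity
    have hs : 1 ≤ Real.sqrt (1 + v ^ 2) := Real.one_le_sqrt.mpr (by nlinarith)
    push_cast
    rw [abs_of_nonneg (by positivity), div_le_one (by positivity)]
    exact one_le_pow₀ hs
  intro x y
  have := hl.dist_le_mul x y
  simpa [Real.dist_eq] using this

/-- The family of sessile solutions foliates the plane. -/
theorem stmt_12 (κ a : ℝ) (hκ : 0 < κ) (ha : 0 < a)
    (U V : ℝ → ℝ → ℝ)
    (hU : ∀ u₀ : ℝ, ∀ r : ℝ,
      HasDerivAt (U u₀) (V u₀ r / Real.sqrt (1 + V u₀ r ^ 2)) r)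
    (hV : ∀ u₀ : ℝ, ∀ r : ℝ, HasDerivAt (V u₀) (κ * U u₀ r) r)
    (hU0 : ∀ u₀ : ℝ, U u₀ 0 = u₀) (hV0 : ∀ u₀ : ℝ, V u₀ 0 = 0) :
    ∀ b : ℝ, ∃! u₀ : ℝ, U u₀ a = b := by
  have hUg : ∀ u₀ r, HasDerivAt (U u₀) (gg (V u₀ r)) r := hU
  set K : ℝ := max 1 κ with hKdef
  have hK1 : (1:ℝ) ≤ K := le_max_left _ _
  have hKκ : κ ≤ K := le_max_right _ _
  -- Key monotonicity-with-gap lemma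
  have key : ∀ u₀ u₁ : ℝ, u₀ < u₁ → U u₀ a + (u₁ - u₀) ≤ U u₁ a := by
    intro u₀ u₁ h01
    set w : ℝ → ℝ := fun r => U u₁ r - U u₀ r with hw
    set z : ℝ → ℝ := fun r => V u₁ r - V u₀ r with hz
    have hw' : ∀ r, HasDerivAt w (gg (V u₁ r) - gg (V u₀ r)) r :=
      fun r => (hUg u₁ r).sub (hUg u₀ r)
    have hz' : ∀ r, HasDerivAt z (κ * w r) r := by
      intro r
      have := (hV u₁ r).sub (hV u₀ r)
      rw [show κ * w r = κ * U u₁ r - κ * U u₀ r by simp [hw, mul_sub]]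
      exact this
    have hw0 : w 0 = u₁ - u₀ := by simp [hw, hU0]
    have hz0 : z 0 = 0 := by simp [hz, hV0]
    have hwc : Continuous w := by
      rw [continuous_iff_continuousAt]; exact fun r => (hw' r).continuousAt
    -- the product w*z is monotone
    have hprod : ∀ r, HasDerivAt (fun r => w r * z r)
        ((gg (V u₁ r) - gg (V u₀ r)) * z r + w r * (κ * w r)) r :=
      fun r => (hw' r).mul (hz' r)
    have hmono : Monotone (fun r => w r * z r) := by
      apply monotone_of_deriv_nonneg (fun r => (hprod r).differentiableAt)
      intro r
      rw [(hprod r).deriv]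
      have h1 : 0 ≤ (gg (V u₁ r) - gg (V u₀ r)) * z r := by
        rcases le_total (V u₀ r) (V u₁ r) with h | h
        · exact mul_nonneg (sub_nonneg.2 (gg_mono h)) (by simp [hz]; linarith)
        · have h2 : gg (V u₁ r) - gg (V u₀ r) ≤ 0 := sub_nonpos.2 (gg_mono h)
          have h3 : z r ≤ 0 := by simp [hz]; linarith
          nlinarith
      nlinarith [sq_nonneg (w r)]
    have hwz : ∀ r, 0 ≤ r → 0 ≤ w r * z r := by
      intro r hr
      have := hmono hr
      simpa [hz0] using this
    -- w^2 is monotone on [0, ∞)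
    have hsqd : ∀ r, HasDerivAt (fun r => w r ^ 2)
        (2 * w r * (gg (V u₁ r) - gg (V u₀ r))) r := by
      intro r
      have := (hw' r).pow 2
      simp [pow_one] at this
      exact this
    have hsqmono : MonotoneOn (fun r => w r ^ 2) (Set.Ici (0:ℝ)) := by
      apply monotoneOn_of_deriv_nonneg (convex_Ici 0) ((hwc.pow 2).continuousOn)
      · intro r _
        exact ((hsqd r).differentiableAt).differentiableWithinAt
      · intro r hr
        rw [interior_Ici] at hr
        show 0 ≤ deriv (fun r => w r ^ 2) r
        rw [(hsqd r).deriv]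
        have hwzr := hwz r (le_of_lt hr)
        rcases lt_trichotomy (z r) 0 with hzr | hzr | hzr
        · have hwneg : w r ≤ 0 := by nlinarith
          have hVle : V u₁ r ≤ V u₀ r := by simp [hz] at hzr; linarith
          have := sub_nonpos.2 (gg_mono hVle)
          nlinarith
        · have hVeq : V u₁ r = V u₀ r := by simp [hz] at hzr; linarith
          simp [hVeq]
        · have hwpos : 0 ≤ w r := by nlinarith
          have hVle : V u₀ r ≤ V u₁ r := by simp [hz] at hzr; linarith
          have := sub_nonneg.2 (gg_mono hVle)
          nlinarith
    have hsq' : ∀ r ∈ Set.Icc (0:ℝ) a, (u₁ - u₀) ^ 2 ≤ w r ^ 2 := by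
      intro r hr
      have := hsqmono Set.self_mem_Ici (Set.mem_Ici.mpr hr.1) hr.1
      simpa [hw0] using this
    have hwa_pos : 0 < w a := by
      by_contra hle
      push_neg at hle
      have hane : w a ≠ 0 := by
        intro h
        have := hsq' a ⟨ha.le, le_refl a⟩
        rw [h] at this
        nlinarith
      have hwa_neg : w a < 0 := lt_of_le_of_ne hle hane
      have hmem : (0:ℝ) ∈ Set.Icc (w a) (w 0) := ⟨hwa_neg.le, by rw [hw0]; linarith⟩
      obtain ⟨r, hr, hr0⟩ := intermediate_value_Icc' ha.le hwc.continuousOn hmem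
      have := hsq' r hr
      rw [hr0] at this
      nlinarith
    have hfin : u₁ - u₀ ≤ w a := by nlinarith [hsq' a ⟨ha.le, le_refl a⟩]
    simp only [hw] at hfin
    linarith
  -- Lipschitz bound via Grönwall
  have lip : ∀ u₀ u₁ : ℝ, |U u₁ a - U u₀ a| ≤ |u₁ - u₀| * Real.exp (K * a) := by
    intro u₀ u₁
    set f : ℝ → ℝ × ℝ := fun r => (U u₁ r - U u₀ r, V u₁ r - V u₀ r) with hf
    set f' : ℝ → ℝ × ℝ :=
      fun r => (gg (V u₁ r) - gg (V u₀ r), κ * (U u₁ r - U u₀ r)) with hf'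
    have hd : ∀ r, HasDerivAt f (f' r) r := by
      intro r
      exact ((hUg u₁ r).sub (hUg u₀ r)).prodMk (by rw [mul_sub]; exact (hV u₁ r).sub (hV u₀ r))
    have hcont : ContinuousOn f (Set.Icc 0 a) := by
      apply Continuous.continuousOn
      rw [continuous_iff_continuousAt]; exact fun r => (hd r).continuousAt
    have hbound : ∀ r ∈ Set.Ico (0:ℝ) a, ‖f' r‖ ≤ K * ‖f r‖ + 0 := by
      intro r _
      rw [add_zero, Prod.norm_def, Prod.norm_def]
      simp only [hf, hf', Real.norm_eq_abs]
      have hN : 0 ≤ max |U u₁ r - U u₀ r| |V u₁ r - V u₀ r| := le_max_iff.mpr (Or.inl (abs_nonneg _))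
      apply max_le
      · calc |gg (V u₁ r) - gg (V u₀ r)| ≤ |V u₁ r - V u₀ r| := gg_lip _ _
          _ ≤ max |U u₁ r - U u₀ r| |V u₁ r - V u₀ r| := le_max_right _ _
          _ ≤ K * max |U u₁ r - U u₀ r| |V u₁ r - V u₀ r| := le_mul_of_one_le_left hN hK1
      · calc |κ * (U u₁ r - U u₀ r)| = κ * |U u₁ r - U u₀ r| := by
              rw [abs_mul, abs_of_pos hκ]
          _ ≤ K * max |U u₁ r - U u₀ r| |V u₁ r - V u₀ r| :=
              mul_le_mul hKκ (le_max_left _ _) (abs_nonneg _) (by linarith)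
    have hgr := norm_le_gronwallBound_of_norm_deriv_right_le hcont
      (fun r _ => (hd r).hasDerivWithinAt) (le_refl ‖f 0‖) hbound a ⟨ha.le, le_refl a⟩
    rw [gronwallBound_ε0] at hgr
    have h0 : ‖f 0‖ = |u₁ - u₀| := by
      simp [hf, Prod.norm_def, hU0, hV0, Real.norm_eq_abs]
    calc |U u₁ a - U u₀ a| ≤ ‖f a‖ := by
          have he : |U u₁ a - U u₀ a| = ‖(f a).1‖ := by simp [hf]
          rw [he, Prod.norm_def]
          exact le_max_left _ _
      _ ≤ ‖f 0‖ * Real.exp (K * (a - 0)) := hgr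
      _ = |u₁ - u₀| * Real.exp (K * a) := by rw [h0, sub_zero]
  -- conclusion
  set φ : ℝ → ℝ := fun u₀ => U u₀ a with hφ
  have hmonoφ : StrictMono φ := by
    intro u₀ u₁ h
    have := key u₀ u₁ h
    simp only [hφ]
    linarith
  have hcontφ : Continuous φ := by
    have hl : LipschitzWith (Real.toNNReal (Real.exp (K * a))) φ := by
      apply LipschitzWith.of_dist_le_mul
      intro x y
      rw [Real.dist_eq, Real.dist_eq, Real.coe_toNNReal _ (Real.exp_pos _).le]
      calc |φ x - φ y| ≤ |x - y| * Real.exp (K * a) := lip y x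
        _ = Real.exp (K * a) * |x - y| := mul_comm _ _
    exact hl.continuous
  intro b
  set c : ℝ := U 0 a with hc
  set M : ℝ := |b - c| + 1 with hM
  have hM0 : 0 < M := by positivity
  have h1 : φ (-M) ≤ b := by
    have hk := key (-M) 0 (by linarith)
    have hna : -(|b - c|) ≤ b - c := neg_abs_le _
    show U (-M) a ≤ b
    linarith [hk, hc, hM, hna]
  have h2 : b ≤ φ M := by
    have hk := key 0 M hM0
    have hna : b - c ≤ |b - c| := le_abs_self _
    show b ≤ U M a
    linarith [hk, hc, hM, hna]
  obtain ⟨u₀, _, hu₀⟩ := intermediate_value_Icc (by linarith : -M ≤ M)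
    hcontφ.continuousOn ⟨h1, h2⟩
  exact ⟨u₀, hu₀, fun y hy => hmonoφ.injective (hy.trans hu₀.symm)⟩
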